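/- Let A be a unital associative ℂ-algebra, φ, ψ : A → ℂ unital linear functionals, and let A₁, …, A_d be unital subalgebras of A that are conditionally free with respect to (φ, ψ). Then for every n ≥ 2, every sequence of indices u(1) ≠ u(2), u(2) ≠ u(3), …, u(n−1) ≠ u(n) in {1, …, d}, and every X₁, …, Xₙ ∈ A with Xᵢ ∈ A_{u(i)} for all i and ψ(Xᵢ) = 0 for all 2 ≤ i ≤ n−1 (no assumption on ψ(X₁) or ψ(Xₙ)), one has φ(X₁X₂⋯Xₙ) = φ(X₁)φ(X₂)⋯φ(Xₙ). -/
import Mathlib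


/-- Unital subalgebras `S i` of `A` are conditionally free (c-free) with respect to
`(φ, ψ)`: for every `n ≥ 2`, indices `u 0 ≠ u 1, …, u (n-2) ≠ u (n-1)`, and elements
`X 0, …, X (n-1)` with `X i ∈ S (u i)` and `ψ (X i) = 0` for all `i < n`, one has
`φ (X 0 ⋯ X (n-1)) = φ (X 0) ⋯ φ (X (n-1))`. -/
def CondFree {A : Type*} [Ring A] [Algebra ℂ A] (φ ψ : A →ₗ[ℂ] ℂ)
    {ι : Type*} (S : ι → Subalgebra ℂ A) : Prop :=
  ∀ (n : ℕ), 2 ≤ n → ∀ (u : ℕ → ι) (X : ℕ → A),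
    (∀ i, i + 1 < n → u i ≠ u (i + 1)) →
    (∀ i, i < n → X i ∈ S (u i)) →
    (∀ i, i < n → ψ (X i) = 0) →
    φ (((List.range n).map X).prod) = ((List.range n).map fun i => φ (X i)).prod

private lemma prod_range_map_head {M : Type*} [Monoid M] (X : ℕ → M) (n : ℕ) :
    ((List.range (n + 1)).map X).prod
      = X 0 * ((List.range n).map (fun i => X (i + 1))).prod := by
  rw [List.range_succ_eq_map, List.map_cons, List.prod_cons, List.map_map]
  rfl

private lemma prod_range_map_last {M : Type*} [Monoid M] (X : ℕ → M) (n : ℕ) :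
    ((List.range (n + 1)).map X).prod
      = ((List.range n).map X).prod * X n := by
  rw [List.range_succ, List.map_append, List.prod_append, List.map_singleton,
    List.prod_singleton]

/-- Lemma A: the factorization for all-centered alternating words of any length. -/
private lemma lemA {A : Type*} [Ring A] [Algebra ℂ A] (φ ψ : A →ₗ[ℂ] ℂ)
    (hφ1 : φ 1 = 1) {ι : Type*} (S : ι → Subalgebra ℂ A) (hfree : CondFree φ ψ S)
    (n : ℕ) (u : ℕ → ι) (X : ℕ → A)
    (hu : ∀ i, i + 1 < n → u i ≠ u (i + 1))
    (hX : ∀ i, i < n → X i ∈ S (u i))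
    (hcent : ∀ i, i < n → ψ (X i) = 0) :
    φ (((List.range n).map X).prod) = ((List.range n).map fun i => φ (X i)).prod := by
  match n with
  | 0 => simpa using hφ1
  | 1 => simp [List.range_succ]
  | (m + 2) => exact hfree (m + 2) (by omega) u X hu hX hcent

/-- Lemma B: the factorization when all elements but possibly the last are centered. -/
private lemma lemB {A : Type*} [Ring A] [Algebra ℂ A] (φ ψ : A →ₗ[ℂ] ℂ)
    (hφ1 : φ 1 = 1) (hψ1 : ψ 1 = 1)
    {ι : Type*} (S : ι → Subalgebra ℂ A) (hfree : CondFree φ ψ S)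
    (n : ℕ) (hn : 1 ≤ n) (u : ℕ → ι) (X : ℕ → A)
    (hu : ∀ i, i + 1 < n → u i ≠ u (i + 1))
    (hX : ∀ i, i < n → X i ∈ S (u i))
    (hcent : ∀ i, i + 1 < n → ψ (X i) = 0) :
    φ (((List.range n).map X).prod) = ((List.range n).map fun i => φ (X i)).prod := by
  obtain ⟨m, rfl⟩ : ∃ m, n = m + 1 := ⟨n - 1, by omega⟩
  set c : ℂ := ψ (X m) with hc
  set Y : ℕ → A := fun i => if i = m then X m - c • (1 : A) else X i with hY
  have hYX : ∀ i, i < m → Y i = X i := by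
    intro i hi; simp only [hY]; rw [if_neg (by omega)]
  have hYmem : ∀ i, i < m + 1 → Y i ∈ S (u i) := by
    intro i hi
    by_cases h : i = m
    · subst h; simp only [hY, if_pos rfl]
      exact sub_mem (hX i (by omega)) (Subalgebra.smul_mem _ (one_mem _) c)
    · rw [hYX i (by omega)]; exact hX i hi
  have hYcent : ∀ i, i < m + 1 → ψ (Y i) = 0 := by
    intro i hi
    by_cases h : i = m
    · subst h; simp only [hY, if_pos rfl, map_sub, map_smul, hψ1, smul_eq_mul, mul_one]
      simp [hc]
    · rw [hYX i (by omega)]; exact hcent i (by omega)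
  have key := lemA φ ψ hφ1 S hfree (m + 1) u Y hu hYmem hYcent
  have hmapY : (List.range m).map Y = (List.range m).map X :=
    List.map_congr_left (fun i hi => hYX i (List.mem_range.mp hi))
  have hmapYφ : (List.range m).map (fun i => φ (Y i))
      = (List.range m).map (fun i => φ (X i)) :=
    List.map_congr_left (fun i hi => by rw [hYX i (List.mem_range.mp hi)])
  have hPfact := lemA φ ψ hφ1 S hfree m u X (fun i hi => hu i (by omega))
    (fun i hi => hX i (by omega)) (fun i hi => hcent i (by omega))
  rw [prod_range_map_last Y, hmapY, prod_range_map_last (fun i => φ (Y i)), hmapYφ] at key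
  rw [prod_range_map_last X, prod_range_map_last (fun i => φ (X i))]
  have hXm : X m = Y m + c • (1 : A) := by simp [hY]
  have hφYm : φ (Y m) = φ (X m) - c := by
    simp [hY, map_sub, map_smul, hφ1, smul_eq_mul]
  calc φ (((List.range m).map X).prod * X m)
      = φ (((List.range m).map X).prod * Y m)
        + c * φ (((List.range m).map X).prod) := by
        rw [hXm, mul_add, map_add, mul_smul_comm, map_smul, mul_one, smul_eq_mul]
    _ = ((List.range m).map fun i => φ (X i)).prod * φ (Y m)
        + c * ((List.range m).map fun i => φ (X i)).prod := by rw [key, hPfact]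
    _ = ((List.range m).map fun i => φ (X i)).prod * φ (X m) := by
        rw [hφYm]; ring

/-- if the subalgebras `S i` are conditionally free with respect to
`(φ, ψ)`, then the factorization `φ(X₁⋯Xₙ) = φ(X₁)⋯φ(Xₙ)` for alternating words of
`ψ`-centered elements remains valid without any centeredness assumption on the two
endpoint elements. -/
theorem condFree_factorization_without_endpoint_assumptions
    {A : Type*} [Ring A] [Algebra ℂ A] (φ ψ : A →ₗ[ℂ] ℂ)
    (hφ1 : φ 1 = 1) (hψ1 : ψ 1 = 1)
    {d : ℕ} (S : Fin d → Subalgebra ℂ A) (hfree : CondFree φ ψ S)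
    (n : ℕ) (hn : 2 ≤ n) (u : ℕ → Fin d) (X : ℕ → A)
    (hu : ∀ i, i + 1 < n → u i ≠ u (i + 1))
    (hX : ∀ i, i < n → X i ∈ S (u i))
    (hcent : ∀ i, 0 < i → i + 1 < n → ψ (X i) = 0) :
    φ (((List.range n).map X).prod) = ((List.range n).map fun i => φ (X i)).prod := by
  obtain ⟨k, rfl⟩ : ∃ k, n = k + 1 := ⟨n - 1, by omega⟩
  set c : ℂ := ψ (X 0) with hc
  set Y : ℕ → A := fun i => if i = 0 then X 0 - c • (1 : A) else X i with hY
  have hYX : ∀ i, 0 < i → Y i = X i := by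
    intro i hi; simp only [hY]; rw [if_neg (by omega)]
  have hYmem : ∀ i, i < k + 1 → Y i ∈ S (u i) := by
    intro i hi
    by_cases h : i = 0
    · subst h; simp only [hY, if_pos rfl]
      exact sub_mem (hX 0 (by omega)) (Subalgebra.smul_mem _ (one_mem _) c)
    · rw [hYX i (by omega)]; exact hX i hi
  have hYcent : ∀ i, i + 1 < k + 1 → ψ (Y i) = 0 := by
    intro i hi
    by_cases h : i = 0
    · subst h; simp only [hY, if_pos rfl, map_sub, map_smul, hψ1, smul_eq_mul, mul_one]
      simp [hc]
    · rw [hYX i (by omega)]; exact hcent i (by omega) hi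
  -- factorization for the word Y (centered except possibly last)
  have keyY := lemB φ ψ hφ1 hψ1 S hfree (k + 1) (by omega) u Y hu hYmem hYcent
  -- factorization for the shifted word X ∘ (·+1)
  have keyQ := lemB φ ψ hφ1 hψ1 S hfree k (by omega) (fun i => u (i + 1))
    (fun i => X (i + 1)) (fun i hi => hu (i + 1) (by omega))
    (fun i hi => hX (i + 1) (by omega))
    (fun i hi => hcent (i + 1) (by omega) (by omega))
  have hmapY : (List.range k).map (fun i => Y (i + 1))
      = (List.range k).map (fun i => X (i + 1)) :=
    List.map_congr_left (fun i _ => hYX (i + 1) (by omega))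
  have hmapYφ : (List.range k).map (fun i => φ (Y (i + 1)))
      = (List.range k).map (fun i => φ (X (i + 1))) :=
    List.map_congr_left (fun i _ => by rw [hYX (i + 1) (by omega)])
  rw [prod_range_map_head Y, hmapY, prod_range_map_head (fun i => φ (Y i)), hmapYφ] at keyY
  rw [prod_range_map_head X, prod_range_map_head (fun i => φ (X i))]
  have hX0 : X 0 = Y 0 + c • (1 : A) := by simp [hY]
  have hφY0 : φ (Y 0) = φ (X 0) - c := by
    simp [hY, map_sub, map_smul, hφ1, smul_eq_mul]
  calc φ (X 0 * ((List.range k).map (fun i => X (i + 1))).prod)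
      = φ (Y 0 * ((List.range k).map (fun i => X (i + 1))).prod)
        + c * φ (((List.range k).map (fun i => X (i + 1))).prod) := by
        rw [hX0, add_mul, map_add, smul_mul_assoc, one_mul, map_smul, smul_eq_mul]
    _ = φ (Y 0) * ((List.range k).map fun i => φ (X (i + 1))).prod
        + c * ((List.range k).map fun i => φ (X (i + 1))).prod := by rw [keyY, keyQ]
    _ = φ (X 0) * ((List.range k).map fun i => φ (X (i + 1))).prod := by
        rw [hφY0]; ring
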